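/- Let a be uniform on {-1,1} and b ~ N(0,1). There exists a function v(a,b) supported on {-1,1} × [0,2] with sup|v| bounded by an absolute constant, such that for every x with |x| ≤ 1, E_{a,b}[v(a,b) · ReLU(a·x + b)] = x. -/

import Mathlib

open MeasureTheory ProbabilityTheory Real

/-- There exists `v(a,b)` supported on `{-1,1} × [0,2]`, uniformly bounded by an
absolute constant, such that for every `|x| ≤ 1`,
`E_{a ~ Unif{±1}, b ~ N(0,1)}[v(a,b) · ReLU(a·x + b)] = x`.
The expectation over `a` is written out as the average of the values at `a = 1` and `a = -1`. -/
theorem stmt1 :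
    ∃ (C : ℝ) (v : ℝ → ℝ → ℝ), 0 < C ∧
      (∀ a b : ℝ, b ∉ Set.Icc (0 : ℝ) 2 → v a b = 0) ∧
      (∀ a b : ℝ, |v a b| ≤ C) ∧
      (∀ x : ℝ, |x| ≤ 1 →
        (∫ b, (v 1 b * max (x + b) 0 + v (-1) b * max (-x + b) 0) / 2
          ∂(gaussianReal 0 1)) = x) := by
  set μ := gaussianReal 0 1 with hμ
  have hI0 : μ (Set.Icc (1:ℝ) 2) ≠ 0 := by
    intro h
    have hac : volume ≪ μ := gaussianReal_absolutelyContinuous' 0 one_ne_zero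
    have := hac h
    simp [Real.volume_Icc] at this
  have hItop : μ (Set.Icc (1:ℝ) 2) ≠ ⊤ := measure_ne_top _ _
  set I : ℝ := (μ (Set.Icc (1:ℝ) 2)).toReal with hIdef
  have hI : 0 < I := ENNReal.toReal_pos hI0 hItop
  set c : ℝ := I⁻¹ with hc
  have hcpos : 0 < c := inv_pos.mpr hI
  refine ⟨c, fun a b => (if a = 1 then c else if a = -1 then -c else 0) *
    Set.indicator (Set.Icc (1:ℝ) 2) 1 b, hcpos, ?_, ?_, ?_⟩
  · intro a b hb
    have : b ∉ Set.Icc (1:ℝ) 2 := by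
      intro h; exact hb ⟨le_trans zero_le_one h.1, h.2⟩
    simp [Set.indicator_of_notMem this]
  · intro a b
    simp only
    rcases Set.indicator_eq_zero_or_self (Set.Icc (1:ℝ) 2) (1 : ℝ → ℝ) b with h | h
    · rw [h, mul_zero]; simp [le_of_lt hcpos]
    · rw [h]; simp only [Pi.one_apply, mul_one]
      split_ifs <;> simp [abs_of_pos hcpos, le_of_lt hcpos]
  · intro x hx
    have hx1 : -1 ≤ x := neg_le_of_abs_le hx
    have hx2 : x ≤ 1 := le_of_abs_le hx
    have key : (fun b => ((if (1:ℝ) = 1 then c else if (1:ℝ) = -1 then -c else 0) *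
          Set.indicator (Set.Icc (1:ℝ) 2) 1 b * max (x + b) 0 +
          (if (-1:ℝ) = 1 then c else if (-1:ℝ) = -1 then -c else 0) *
          Set.indicator (Set.Icc (1:ℝ) 2) 1 b * max (-x + b) 0) / 2)
        = Set.indicator (Set.Icc (1:ℝ) 2) (fun _ => c * x) := by
      funext b
      by_cases hb : b ∈ Set.Icc (1:ℝ) 2
      · have h1 : max (x + b) 0 = x + b := max_eq_left (by linarith [hb.1])
        have h2 : max (-x + b) 0 = -x + b := max_eq_left (by linarith [hb.1])
        rw [Set.indicator_of_mem hb, Set.indicator_of_mem hb]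
        simp only [if_pos rfl]
        norm_num [h1, h2]
        ring
      · rw [Set.indicator_of_notMem hb, Set.indicator_of_notMem hb]
        simp
    rw [key, integral_indicator_const _ measurableSet_Icc]
    simp only [smul_eq_mul, measureReal_def, ← hIdef]
    rw [hc]
    field_simp
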